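/- arXiv:1705.00646 — 4 statements merged into one kernel-verified Lean document; each statement's English description precedes it below -/
import Mathlib

section
/- For every K > 0, C_D0 > 0 and every flight path angle γ ∈ (−π/2, π/2), the quadratic C_D0·R² − sin γ·R − 3K·cos²γ has exactly one positive root, namely R_γ = (sin γ + √(sin²γ + 12·K·C_D0·cos²γ)) / (2·C_D0) (the other root is negative), and the function φ(R) = C_D0·√R + K·cos²γ·R^{−3/2} + sin γ·R^{−1/2} on (0, ∞) attains its global minimum at the unique point R = R_γ. -/
open Real

private lemma rpow_half_sq {t : ℝ} (ht : 0 < t) : (t^2 : ℝ) ^ (-(1/2) : ℝ) = t⁻¹ := by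
  rw [← Real.rpow_natCast t 2, ← Real.rpow_mul ht.le]
  norm_num [Real.rpow_neg_one]

private lemma rpow_threehalf_sq {t : ℝ} (ht : 0 < t) : (t^2 : ℝ) ^ (-(3/2) : ℝ) = (t^3)⁻¹ := by
  rw [← Real.rpow_natCast t 2, ← Real.rpow_mul ht.le]
  norm_num [Real.rpow_neg ht.le]


private lemma Gpos (CD0 s t u : ℝ) (hCD0 : 0 < CD0) (htpos : 0 < t) (hupos : 0 < u)
    (h : s * u^2 < CD0 * u^4) :
    0 < CD0 * u * (3*t^2 + 2*t*u + u^2) - s * (2*t + u) := by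
  rcases le_or_gt s 0 with hsle | hspos
  · nlinarith [mul_pos hCD0 hupos, mul_pos htpos hupos, sq_nonneg t]
  · have hcu : s < CD0 * u^2 := by nlinarith [mul_pos hupos hupos]
    nlinarith [mul_pos (mul_pos hCD0 hupos) (mul_pos htpos htpos),
      mul_pos htpos (sub_pos.mpr hcu), mul_pos hupos (sub_pos.mpr hcu)]

/-- For `K > 0`, `C_D0 > 0` and `γ ∈ (−π/2, π/2)`, the quadratic
`C_D0·R² − sin γ·R − 3K·cos²γ` has exactly one positive root, namely
`R_γ = (sin γ + √(sin²γ + 12·K·C_D0·cos²γ))/(2·C_D0)` (any other root is negative),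
and `φ(R) = C_D0·√R + K·cos²γ·R^{−3/2} + sin γ·R^{−1/2}` on `(0, ∞)` attains its global
minimum at the unique point `R = R_γ`. -/
theorem stmt4 (K CD0 γ : ℝ) (hK : 0 < K) (hCD0 : 0 < CD0)
    (hγ : γ ∈ Set.Ioo (-(π/2)) (π/2)) :
    let q : ℝ → ℝ := fun R => CD0 * R^2 - sin γ * R - 3 * K * (cos γ)^2
    let Rγ : ℝ := (sin γ + Real.sqrt ((sin γ)^2 + 12 * K * CD0 * (cos γ)^2)) / (2 * CD0)
    let φ : ℝ → ℝ := fun R =>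
      CD0 * Real.sqrt R + K * (cos γ)^2 * R ^ (-(3/2) : ℝ) + sin γ * R ^ (-(1/2) : ℝ)
    (0 < Rγ ∧ q Rγ = 0 ∧ (∀ R : ℝ, q R = 0 → R = Rγ ∨ R < 0)) ∧
    (∀ R ∈ Set.Ioi (0:ℝ), R ≠ Rγ → φ Rγ < φ R) := by
  intro q Rγ φ
  set s := sin γ with hs
  set c := cos γ with hc
  have hcpos : 0 < c := Real.cos_pos_of_mem_Ioo hγ
  set D : ℝ := s^2 + 12 * K * CD0 * c^2 with hD
  have hDpos : 0 < D := by positivity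
  have hsqD : Real.sqrt D ^ 2 = D := Real.sq_sqrt hDpos.le
  have habs : |s| < Real.sqrt D := by
    rw [← Real.sqrt_sq_eq_abs]
    refine Real.sqrt_lt_sqrt (sq_nonneg s) ?_
    have : 0 < 12 * K * CD0 * c^2 := by positivity
    rw [hD]; linarith
  have hRγpos : 0 < Rγ := by
    have h1 : 0 < s + Real.sqrt D := by
      have := neg_abs_le s
      linarith [habs]
    exact div_pos h1 (by linarith)
  have hqRγ : q Rγ = 0 := by
    show CD0 * Rγ^2 - s * Rγ - 3 * K * c^2 = 0
    have : Rγ = (s + Real.sqrt D) / (2 * CD0) := rfl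
    rw [this]
    field_simp
    nlinarith [hsqD]
  refine ⟨⟨hRγpos, hqRγ, ?_⟩, ?_⟩
  · intro R hR
    set R₂ : ℝ := (s - Real.sqrt D) / (2 * CD0) with hR₂
    have hR₂neg : R₂ < 0 := by
      apply div_neg_of_neg_of_pos _ (by linarith)
      have := le_abs_self s
      linarith [habs]
    have hfac : q R = CD0 * (R - Rγ) * (R - R₂) := by
      show CD0 * R^2 - s * R - 3 * K * c^2 = _
      have h1 : Rγ = (s + Real.sqrt D) / (2 * CD0) := rfl
      rw [h1, hR₂]
      field_simp
      nlinarith [hsqD]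
    rw [hfac] at hR
    rcases mul_eq_zero.mp hR with h | h
    · rcases mul_eq_zero.mp h with h | h
      · exact absurd h hCD0.ne'
      · left; linarith [sub_eq_zero.mp h]
    · right; have := sub_eq_zero.mp h; linarith [hR₂neg]
  · intro R hR hne
    have hRpos : 0 < R := hR
    set u : ℝ := Real.sqrt Rγ with hu
    set t : ℝ := Real.sqrt R with ht
    have hupos : 0 < u := Real.sqrt_pos.mpr hRγpos
    have htpos : 0 < t := Real.sqrt_pos.mpr hRpos
    have hu2 : u^2 = Rγ := Real.sq_sqrt hRγpos.le
    have ht2 : t^2 = R := Real.sq_sqrt hRpos.le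
    have htu : t ≠ u := by
      intro h; apply hne; rw [← ht2, ← hu2, h]
    have hkey : CD0 * u^4 = s * u^2 + 3 * K * c^2 := by
      have h0 := hqRγ
      simp only [q] at h0
      rw [← hu2] at h0
      nlinarith [h0]
    have hφR : φ R = CD0 * t + K * c^2 * (t^3)⁻¹ + s * t⁻¹ := by
      show CD0 * Real.sqrt R + K * c^2 * R ^ (-(3/2) : ℝ) + s * R ^ (-(1/2) : ℝ) = _
      rw [← ht2, rpow_threehalf_sq htpos, rpow_half_sq htpos, Real.sqrt_sq htpos.le]
    have hφRγ : φ Rγ = CD0 * u + K * c^2 * (u^3)⁻¹ + s * u⁻¹ := by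
      show CD0 * Real.sqrt Rγ + K * c^2 * Rγ ^ (-(3/2) : ℝ) + s * Rγ ^ (-(1/2) : ℝ) = _
      rw [← hu2, rpow_threehalf_sq hupos, rpow_half_sq hupos, Real.sqrt_sq hupos.le]
    rw [hφR, hφRγ]
    have hG : 0 < CD0 * u * (3*t^2 + 2*t*u + u^2) - s * (2*t + u) := by
      apply Gpos CD0 s t u hCD0 htpos hupos
      have h3 : 0 < 3 * K * c^2 := by positivity
      linarith [hkey]
    have hdiffsq : 0 < (t - u)^2 := pow_two_pos_of_ne_zero (sub_ne_zero.mpr htu)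
    rw [← sub_pos]
    have hident : CD0 * t + K * c^2 * (t^3)⁻¹ + s * t⁻¹ -
        (CD0 * u + K * c^2 * (u^3)⁻¹ + s * u⁻¹) =
        (t - u)^2 * u^2 * (CD0 * u * (3*t^2 + 2*t*u + u^2) - s * (2*t + u)) /
          (3 * t^3 * u^3) := by
      rw [eq_div_iff (by positivity : (3*t^3*u^3 : ℝ) ≠ 0)]
      field_simp
      linear_combination (t^3 - u^3) * hkey
    rw [hident]
    have h33 : 0 < 3*t^3*u^3 := by positivity
    exact div_pos (mul_pos (mul_pos hdiffsq (by positivity)) hG) h33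
end

section
/- Let K > 0 and C_D0 > 0 satisfy 12·K·C_D0 < 1, and let γ ∈ (−π/2, π/2). Setting t = τ(γ) = C_D0·R_γ + K·cos²γ/R_γ + sin γ with R_γ = (sin γ + √(sin²γ + 12·K·C_D0·cos²γ))/(2·C_D0), one has sin γ = (2t − √(t²·(1 − 12·K·C_D0) + 64·K²·C_D0² + 16·K·C_D0)) / (2·(1 + 4·K·C_D0)). -/
open Real

lemma stmt7_aux (K CD0 s c D A t : ℝ) (hK : 0 < K) (hCD0 : 0 < CD0)
    (h12 : 12 * K * CD0 < 1) (hc : 0 < c) (hpyth : s ^ 2 + c ^ 2 = 1)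
    (hDnn : 0 ≤ D) (hDsq : D ^ 2 = s ^ 2 + 12 * K * CD0 * c ^ 2)
    (ht : t = (4 * s + 2 * D) / 3) (hA : A = 1 + 4 * K * CD0) :
    s = (2 * t - Real.sqrt (t ^ 2 * (1 - 12 * K * CD0) + 64 * K ^ 2 * CD0 ^ 2 + 16 * K * CD0))
      / (2 * A) := by
  have hDgt : -s < D := by
    nlinarith [mul_pos (mul_pos hK hCD0) (pow_pos hc 2), sq_nonneg (D + s), sq_nonneg (D - s)]
  have hApos : 0 < A := by rw [hA]; positivity
  have hnn : 0 ≤ 2 * t - 2 * A * s := by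
    rw [ht, hA]
    nlinarith [hDgt, hDnn, mul_pos hK hCD0, sq_nonneg (D + s)]
  have hE : t ^ 2 * (1 - 12 * K * CD0) + 64 * K ^ 2 * CD0 ^ 2 + 16 * K * CD0
      = (2 * t - 2 * A * s) ^ 2 := by
    rw [ht, hA]
    linear_combination (-4 * (1 + 4 * K * CD0) / 3) * hDsq
      + (-16 * K * CD0 * (1 + 4 * K * CD0)) * hpyth
  rw [hE, Real.sqrt_sq hnn]
  field_simp
  ring

/-- Let `K > 0`, `C_D0 > 0` with `12·K·C_D0 < 1`, and `γ ∈ (−π/2, π/2)`. With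
`t = τ(γ) = C_D0·R_γ + K·cos²γ/R_γ + sin γ` where
`R_γ = (sin γ + √(sin²γ + 12·K·C_D0·cos²γ))/(2·C_D0)`, one has
`sin γ = (2t − √(t²·(1 − 12·K·C_D0) + 64·K²·C_D0² + 16·K·C_D0))/(2·(1 + 4·K·C_D0))`. -/
theorem stmt7 (K CD0 γ : ℝ) (hK : 0 < K) (hCD0 : 0 < CD0)
    (h12 : 12 * K * CD0 < 1) (hγ : γ ∈ Set.Ioo (-(π/2)) (π/2)) :
    let Rγ : ℝ := (sin γ + Real.sqrt ((sin γ)^2 + 12 * K * CD0 * (cos γ)^2)) / (2 * CD0)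
    let t : ℝ := CD0 * Rγ + K * (cos γ)^2 / Rγ + sin γ
    sin γ = (2 * t - Real.sqrt (t^2 * (1 - 12 * K * CD0) + 64 * K^2 * CD0^2 + 16 * K * CD0))
      / (2 * (1 + 4 * K * CD0)) := by
  intro Rγ t
  obtain ⟨h1, h2⟩ := hγ
  have hc : 0 < cos γ := Real.cos_pos_of_mem_Ioo ⟨h1, h2⟩
  have hpyth : (sin γ) ^ 2 + (cos γ) ^ 2 = 1 := sin_sq_add_cos_sq γ
  set s := sin γ with hs
  set c := cos γ with hcdef
  set D := Real.sqrt (s ^ 2 + 12 * K * CD0 * c ^ 2) with hD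
  have hDnn : 0 ≤ D := Real.sqrt_nonneg _
  have hDsq : D ^ 2 = s ^ 2 + 12 * K * CD0 * c ^ 2 := by
    rw [hD, Real.sq_sqrt]
    nlinarith [sq_nonneg s, pow_pos hc 2, mul_pos hK hCD0]
  have hDgt : -s < D := by
    nlinarith [mul_pos (mul_pos hK hCD0) (pow_pos hc 2), sq_nonneg (D + s), sq_nonneg (D - s)]
  have hsD : 0 < s + D := by linarith
  have hR : Rγ = (s + D) / (2 * CD0) := rfl
  have hRpos : 0 < Rγ := by rw [hR]; positivity
  have key1 : CD0 * Rγ = (s + D) / 2 := by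
    rw [hR]; field_simp
  have key2 : K * c ^ 2 / Rγ = (D - s) / 6 := by
    rw [div_eq_iff (ne_of_gt hRpos), hR]
    field_simp
    linear_combination -hDsq
  have ht : t = (4 * s + 2 * D) / 3 := by
    show CD0 * Rγ + K * c ^ 2 / Rγ + s = _
    rw [key1, key2]; ring
  exact stmt7_aux K CD0 s c D (1 + 4 * K * CD0) t hK hCD0 h12 hc hpyth hDnn hDsq ht rfl
end

section
/- Let K > 0 and C_D0 > 0 satisfy 12·K·C_D0 ≤ 1, and let γ ∈ (−π/2, π/2). If R = R_γ = (sin γ + √(sin²γ + 12·K·C_D0·cos²γ))/(2·C_D0), then R² + 36·K² − 12·K·C_D0·R² ≥ 0 and 6·K·sin γ = R − √(R² + 36·K² − 12·K·C_D0·R²). -/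
open Real

/-- Let `K > 0`, `C_D0 > 0` with `12·K·C_D0 ≤ 1`, and `γ ∈ (−π/2, π/2)`. If
`R = R_γ = (sin γ + √(sin²γ + 12·K·C_D0·cos²γ))/(2·C_D0)`, then
`R² + 36·K² − 12·K·C_D0·R² ≥ 0` and `6·K·sin γ = R − √(R² + 36·K² − 12·K·C_D0·R²)`. -/
theorem stmt8 (K CD0 γ : ℝ) (hK : 0 < K) (hCD0 : 0 < CD0)
    (h12 : 12 * K * CD0 ≤ 1) (hγ : γ ∈ Set.Ioo (-(π/2)) (π/2)) :
    let R : ℝ := (sin γ + Real.sqrt ((sin γ)^2 + 12 * K * CD0 * (cos γ)^2)) / (2 * CD0)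
    0 ≤ R^2 + 36 * K^2 - 12 * K * CD0 * R^2 ∧
    6 * K * sin γ = R - Real.sqrt (R^2 + 36 * K^2 - 12 * K * CD0 * R^2) := by
  intro R
  obtain ⟨h1, h2⟩ := hγ
  set s := sin γ with hs
  set c := cos γ with hc
  have hcpos : 0 < c := Real.cos_pos_of_mem_Ioo ⟨h1, h2⟩
  have harg : 0 ≤ s^2 + 12 * K * CD0 * c^2 := by positivity
  set D := Real.sqrt (s^2 + 12 * K * CD0 * c^2) with hDdef
  have hD2 : D^2 = s^2 + 12 * K * CD0 * c^2 := Real.sq_sqrt harg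
  have hcs : c^2 = 1 - s^2 := by
    have := sin_sq_add_cos_sq γ; rw [← hs, ← hc] at this; linarith
  have hDs : |s| ≤ D := by
    rw [← Real.sqrt_sq_eq_abs]
    exact Real.sqrt_le_sqrt (by nlinarith [mul_nonneg (mul_nonneg hK.le hCD0.le) (sq_nonneg c)])
  have hDge : -s ≤ D := (neg_le_abs s).trans hDs
  have hRdef : R = (s + D) / (2 * CD0) := rfl
  have hnum : 0 ≤ s * (1 - 12 * K * CD0) + D := by
    rcases le_or_gt 0 s with h | h
    · nlinarith [mul_nonneg (mul_nonneg hK.le hCD0.le) h, le_abs_self s]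
    · nlinarith [mul_nonneg (mul_nonneg hK.le hCD0.le) (neg_nonneg.mpr h.le)]
  have hRK : 0 ≤ R - 6 * K * s := by
    rw [hRdef]
    have : R - 6 * K * s = (s * (1 - 12 * K * CD0) + D) / (2 * CD0) := by
      rw [hRdef]; field_simp; ring
    rw [hRdef] at this; rw [this]
    positivity
  have key : R^2 + 36 * K^2 - 12 * K * CD0 * R^2 = (R - 6 * K * s)^2 := by
    rw [hRdef]
    have hC : (CD0 : ℝ) ≠ 0 := ne_of_gt hCD0
    field_simp
    linear_combination (-(12 * K * CD0)) * hD2 + (-(144 * K^2 * CD0^2)) * hcs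
  constructor
  · rw [key]; positivity
  · rw [key, Real.sqrt_sq hRK]; ring
end

section
/- Let K > 0 and C_D0 > 0. For γ ∈ (0, π/2] define R_γ = (sin γ + √(sin²γ + 12·K·C_D0·cos²γ))/(2·C_D0), τ(γ) = C_D0·R_γ + K·cos²γ/R_γ + sin γ, and ψ(γ) = τ(γ)^{3/2} / ( sin γ · √(R_γ) ). Then ψ is continuous and positive on (0, π/2], ψ(γ) → +∞ as γ → 0⁺, ψ(π/2) = 2·√2·√(C_D0), and consequently for every c ≥ 2·√2·√(C_D0) there exists γ ∈ (0, π/2] with ψ(γ) = c. -/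
open Real

/-- For `K > 0`, `C_D0 > 0`, with `R_γ` the range-optimal pressure ratio, `τ(γ)` the
corresponding thrust-to-weight ratio and `ψ(γ) = τ(γ)^{3/2}/(sin γ·√(R_γ))`, the function
`ψ` is continuous and positive on `(0, π/2]`, tends to `+∞` as `γ → 0⁺`, satisfies
`ψ(π/2) = 2·√2·√(C_D0)`, and attains every value `c ≥ 2·√2·√(C_D0)` on `(0, π/2]`. -/
theorem stmt14 (K CD0 : ℝ) (hK : 0 < K) (hCD0 : 0 < CD0) :
    let R : ℝ → ℝ := fun γ =>
      (sin γ + Real.sqrt ((sin γ)^2 + 12 * K * CD0 * (cos γ)^2)) / (2 * CD0)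
    let τ : ℝ → ℝ := fun γ => CD0 * R γ + K * (cos γ)^2 / R γ + sin γ
    let ψ : ℝ → ℝ := fun γ => (τ γ) ^ ((3:ℝ)/2) / (sin γ * Real.sqrt (R γ))
    ContinuousOn ψ (Set.Ioc 0 (π/2)) ∧
    (∀ γ ∈ Set.Ioc 0 (π/2), 0 < ψ γ) ∧
    Filter.Tendsto ψ (nhdsWithin 0 (Set.Ioi 0)) Filter.atTop ∧
    ψ (π/2) = 2 * Real.sqrt 2 * Real.sqrt CD0 ∧
    (∀ c : ℝ, 2 * Real.sqrt 2 * Real.sqrt CD0 ≤ c → ∃ γ ∈ Set.Ioc 0 (π/2), ψ γ = c) := by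
  intro R τ ψ
  have hpi2 : (0:ℝ) < π/2 := by positivity
  have hsin : ∀ γ ∈ Set.Ioc (0:ℝ) (π/2), 0 < sin γ := fun γ hγ =>
    Real.sin_pos_of_pos_of_lt_pi hγ.1 (lt_of_le_of_lt hγ.2 (by linarith [pi_pos]))
  have hRpos : ∀ γ, 0 < sin γ → 0 < R γ := by
    intro γ h
    have h2 : 0 ≤ Real.sqrt ((sin γ)^2 + 12 * K * CD0 * (cos γ)^2) := Real.sqrt_nonneg _
    show 0 < (sin γ + Real.sqrt ((sin γ)^2 + 12 * K * CD0 * (cos γ)^2)) / (2 * CD0)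
    exact div_pos (by linarith) (by linarith)
  have hτpos : ∀ γ, 0 < sin γ → 0 < τ γ := by
    intro γ h
    have hR := hRpos γ h
    have h1 : 0 < CD0 * R γ := mul_pos hCD0 hR
    have h2 : 0 ≤ K * (cos γ)^2 / R γ := div_nonneg (by positivity) hR.le
    show 0 < CD0 * R γ + K * (cos γ)^2 / R γ + sin γ
    linarith
  have hψpos : ∀ γ ∈ Set.Ioc (0:ℝ) (π/2), 0 < ψ γ := by
    intro γ hγ
    have hs := hsin γ hγ
    have hR := hRpos γ hs
    have hτ := hτpos γ hs
    show 0 < (τ γ) ^ ((3:ℝ)/2) / (sin γ * Real.sqrt (R γ))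
    exact div_pos (Real.rpow_pos_of_pos hτ _) (mul_pos hs (Real.sqrt_pos.2 hR))
  have hRcont : Continuous R := by
    show Continuous fun γ =>
      (sin γ + Real.sqrt ((sin γ)^2 + 12 * K * CD0 * (cos γ)^2)) / (2 * CD0)
    exact (continuous_sin.add
      (((continuous_sin.pow 2).add (continuous_const.mul (continuous_cos.pow 2))).sqrt)).div_const _
  have hτcont : ContinuousOn τ (Set.Ioc 0 (π/2)) := by
    show ContinuousOn (fun γ => CD0 * R γ + K * (cos γ)^2 / R γ + sin γ) _
    refine ((continuousOn_const.mul hRcont.continuousOn).add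
      ((continuousOn_const.mul ((continuous_cos.pow 2).continuousOn)).div
        hRcont.continuousOn ?_)).add continuous_sin.continuousOn
    exact fun γ hγ => (hRpos γ (hsin γ hγ)).ne'
  have hψcont : ContinuousOn ψ (Set.Ioc 0 (π/2)) := by
    show ContinuousOn (fun γ => (τ γ) ^ ((3:ℝ)/2) / (sin γ * Real.sqrt (R γ))) _
    refine (hτcont.rpow_const (fun γ hγ => Or.inr (by norm_num))).div
      (continuous_sin.continuousOn.mul hRcont.continuousOn.sqrt) ?_
    intro γ hγ
    exact (mul_pos (hsin γ hγ) (Real.sqrt_pos.2 (hRpos γ (hsin γ hγ)))).ne'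
  -- the limit as γ → 0⁺
  set L : ℝ := Real.sqrt (12 * K * CD0) / (2 * CD0) with hLdef
  have hL : 0 < L := div_pos (Real.sqrt_pos.2 (by positivity)) (by linarith)
  have hR0 : Filter.Tendsto R (nhds 0) (nhds L) := by
    have h := hRcont.tendsto 0
    have hval : R 0 = L := by
      show (sin 0 + Real.sqrt ((sin 0)^2 + 12 * K * CD0 * (cos 0)^2)) / (2 * CD0) = L
      rw [Real.sin_zero, Real.cos_zero]
      norm_num [hLdef]
    rwa [hval] at h
  have hc2 : Filter.Tendsto (fun γ => (cos γ)^2) (nhds 0) (nhds 1) := by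
    have := ((continuous_cos.pow 2)).tendsto 0
    simpa using (continuous_cos.tendsto 0).pow 2
  have hs0 : Filter.Tendsto sin (nhds 0) (nhds 0) := by
    simpa using continuous_sin.tendsto 0
  have hτ0 : Filter.Tendsto τ (nhds 0) (nhds (CD0 * L + K / L)) := by
    show Filter.Tendsto (fun γ => CD0 * R γ + K * (cos γ)^2 / R γ + sin γ) _ _
    have h : Filter.Tendsto (fun γ => CD0 * R γ + (K * (cos γ)^2) / R γ + sin γ) (nhds 0)
        (nhds (CD0 * L + (K * 1) / L + 0)) :=
      (((tendsto_const_nhds (x := CD0)).mul hR0).add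
        (((tendsto_const_nhds (x := K)).mul hc2).div hR0 hL.ne')).add hs0
    simpa using h
  have hT : 0 < CD0 * L + K / L := by positivity
  have hnum : Filter.Tendsto (fun γ => (τ γ) ^ ((3:ℝ)/2) / Real.sqrt (R γ)) (nhds 0)
      (nhds ((CD0 * L + K / L) ^ ((3:ℝ)/2) / Real.sqrt L)) :=
    (hτ0.rpow_const (Or.inr (by norm_num))).div hR0.sqrt
      (by positivity)
  have hCpos : 0 < (CD0 * L + K / L) ^ ((3:ℝ)/2) / Real.sqrt L :=
    div_pos (Real.rpow_pos_of_pos hT _) (Real.sqrt_pos.2 hL)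
  have hinv : Filter.Tendsto (fun γ => (sin γ)⁻¹) (nhdsWithin 0 (Set.Ioi 0)) Filter.atTop := by
    apply tendsto_inv_nhdsGT_zero.comp
    refine tendsto_nhdsWithin_of_tendsto_nhds_of_eventually_within _
      (hs0.mono_left nhdsWithin_le_nhds) ?_
    filter_upwards [Ioo_mem_nhdsGT_of_mem (Set.mem_Ico.2 ⟨le_refl (0:ℝ), pi_pos⟩)] with x hx
    exact Real.sin_pos_of_pos_of_lt_pi hx.1 hx.2
  have hψeq : ∀ γ, ψ γ = ((τ γ) ^ ((3:ℝ)/2) / Real.sqrt (R γ)) * (sin γ)⁻¹ := by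
    intro γ
    show (τ γ) ^ ((3:ℝ)/2) / (sin γ * Real.sqrt (R γ)) = _
    rw [div_mul_eq_div_div_swap, div_eq_mul_inv]
  have htend : Filter.Tendsto ψ (nhdsWithin 0 (Set.Ioi 0)) Filter.atTop := by
    have h := Filter.Tendsto.pos_mul_atTop hCpos (hnum.mono_left nhdsWithin_le_nhds) hinv
    exact h.congr (fun γ => (hψeq γ).symm)
  have hval : ψ (π/2) = 2 * Real.sqrt 2 * Real.sqrt CD0 := by
    have h1 : R (π/2) = CD0⁻¹ := by
      show (sin (π/2) + Real.sqrt ((sin (π/2))^2 + 12 * K * CD0 * (cos (π/2))^2)) / (2 * CD0)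
        = CD0⁻¹
      rw [Real.sin_pi_div_two, Real.cos_pi_div_two]
      norm_num
      field_simp
    have h2 : τ (π/2) = 2 := by
      show CD0 * R (π/2) + K * (cos (π/2))^2 / R (π/2) + sin (π/2) = 2
      rw [h1, Real.cos_pi_div_two, Real.sin_pi_div_two]
      field_simp
      norm_num
    show (τ (π/2)) ^ ((3:ℝ)/2) / (sin (π/2) * Real.sqrt (R (π/2))) = _
    rw [h2, h1, Real.sin_pi_div_two, one_mul, Real.sqrt_inv, div_eq_mul_inv, inv_inv]
    have h3 : (2:ℝ) ^ ((3:ℝ)/2) = 2 * Real.sqrt 2 := by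
      rw [show ((3:ℝ)/2) = 1 + 1/2 by norm_num, Real.rpow_add (by norm_num), Real.rpow_one,
        ← Real.sqrt_eq_rpow]
    rw [h3]
  refine ⟨hψcont, hψpos, htend, hval, ?_⟩
  intro c hc
  have hev : ∀ᶠ γ in nhdsWithin (0:ℝ) (Set.Ioi 0), c ≤ ψ γ := htend.eventually_ge_atTop c
  have hev2 : Set.Ioo (0:ℝ) (π/2) ∈ nhdsWithin (0:ℝ) (Set.Ioi 0) :=
    Ioo_mem_nhdsGT_of_mem (Set.mem_Ico.2 ⟨le_refl 0, hpi2⟩)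
  obtain ⟨δ, hδc, hδmem⟩ := (hev.and (Filter.eventually_of_mem hev2 (fun x hx => hx))).exists
  have hsub : Set.Icc δ (π/2) ⊆ Set.Ioc 0 (π/2) := fun x hx =>
    ⟨lt_of_lt_of_le hδmem.1 hx.1, hx.2⟩
  have hivt := intermediate_value_Icc' (le_of_lt hδmem.2) (hψcont.mono hsub)
  have hcmem : c ∈ Set.Icc (ψ (π/2)) (ψ δ) := ⟨hval ▸ hc, hδc⟩
  obtain ⟨γ, hγ, hγc⟩ := hivt hcmem
  exact ⟨γ, ⟨lt_of_lt_of_le hδmem.1 hγ.1, hγ.2⟩, hγc⟩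
end
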